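/- arXiv:1303.5583 — 3 statements merged into one kernel-verified Lean document; each statement's English description precedes it below -/
import Mathlib

section
/- Let P be C³ on [0,∞) with P' > 0 and P'' > 0, and let f(v) := min_{u>0}(v²/u + P(u)) with minimizer u*(v) satisfying P'(u*)u*² = v². Then u* is differentiable in v, and f''(v) = 2P''(u*) / (P''(u*)u* + 2P'(u*)) > 0; in particular f is strictly convex on (0,∞). -/
open Set

/-- For `P` C³ on `[0,∞)` with `P' > 0`, `P'' > 0`, the minimizer `u*(v)` of
`F(·,v)` (determined by `P'(u*)u*² = v²`) is differentiable in `v`, and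
`f''(v) = 2P''(u*)/(P''(u*)u* + 2P'(u*)) > 0`, where `f(v) = F(u*(v),v)`;
in particular `f` is strictly convex on `(0,∞)`. -/
theorem stmt4 (P P' P'' P''' : ℝ → ℝ)
    (hP' : ∀ u ∈ Ici (0:ℝ), HasDerivAt P (P' u) u)
    (hP'' : ∀ u ∈ Ici (0:ℝ), HasDerivAt P' (P'' u) u)
    (hP''' : ∀ u ∈ Ici (0:ℝ), HasDerivAt P'' (P''' u) u)
    (hP'''cont : ContinuousOn P''' (Ici 0))
    (hP'pos : ∀ u ∈ Ici (0:ℝ), 0 < P' u)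
    (hP''pos : ∀ u ∈ Ici (0:ℝ), 0 < P'' u)
    (ustar : ℝ → ℝ)
    (hustar_pos : ∀ v ∈ Ioi (0:ℝ), 0 < ustar v)
    (hustar_eq : ∀ v ∈ Ioi (0:ℝ), P' (ustar v) * (ustar v)^2 = v^2) :
    (∀ v ∈ Ioi (0:ℝ), DifferentiableAt ℝ ustar v) ∧
    (∀ v ∈ Ioi (0:ℝ),
      deriv (deriv (fun v => v^2 / ustar v + P (ustar v))) v
        = 2 * P'' (ustar v) / (P'' (ustar v) * ustar v + 2 * P' (ustar v)) ∧
      0 < 2 * P'' (ustar v) / (P'' (ustar v) * ustar v + 2 * P' (ustar v))) ∧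
    StrictConvexOn ℝ (Ioi 0) (fun v => v^2 / ustar v + P (ustar v)) := by
  set g : ℝ → ℝ := fun u => P' u * u ^ 2 with hgdef
  -- derivative of g
  have hgderiv : ∀ u ∈ Ici (0:ℝ), HasDerivAt g (P'' u * u ^ 2 + 2 * P' u * u) u := by
    intro u hu
    have h1 : HasDerivAt (fun x : ℝ => x ^ 2) (2 * u) u := by
      simpa using hasDerivAt_pow 2 u
    have : HasDerivAt g (P'' u * u ^ 2 + P' u * (2 * u)) u := (hP'' u hu).mul h1
    convert this using 1
    ring
  have hg'pos : ∀ u ∈ Ioi (0:ℝ), 0 < P'' u * u ^ 2 + 2 * P' u * u := by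
    intro u hu
    have hu0 : (0:ℝ) < u := hu
    have := hP'pos u (le_of_lt hu0)
    have := hP''pos u (le_of_lt hu0)
    positivity
  -- g is strictly monotone on Ici 0
  have hgmono : StrictMonoOn g (Ici 0) := by
    apply strictMonoOn_of_deriv_pos (convex_Ici 0)
    · intro u hu
      exact ((hgderiv u hu).differentiableAt).continuousAt.continuousWithinAt
    · intro u hu
      rw [interior_Ici] at hu
      rw [(hgderiv u (le_of_lt hu : (0:ℝ) ≤ u)).deriv]
      exact hg'pos u hu
  -- the defining equation in terms of g
  have hgeq : ∀ v ∈ Ioi (0:ℝ), g (ustar v) = v ^ 2 := fun v hv => hustar_eq v hv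
  -- continuity of ustar
  have hcont : ∀ v ∈ Ioi (0:ℝ), ContinuousAt ustar v := by
    intro v hv
    have hv0 : (0:ℝ) < v := hv
    have hu0 : 0 < ustar v := hustar_pos v hv
    have hsq : Filter.Tendsto (fun x : ℝ => x ^ 2) (nhds v) (nhds (v ^ 2)) :=
      (continuous_pow 2).continuousAt
    have hmem : Ioi (0:ℝ) ∈ nhds v := Ioi_mem_nhds hv0
    rw [ContinuousAt]
    rw [tendsto_order]
    constructor
    · intro a ha
      rcases le_or_gt a 0 with h0 | h0
      · filter_upwards [hmem] with w hw
        exact lt_of_le_of_lt h0 (hustar_pos w hw)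
      · have hga : g a < v ^ 2 := by
          rw [← hgeq v hv]
          exact hgmono (le_of_lt h0) (le_of_lt hu0) ha
        have hev : ∀ᶠ w in nhds v, g a < w ^ 2 := hsq.eventually_const_lt hga
        filter_upwards [hmem, hev] with w hw hgw
        by_contra hle
        push_neg at hle
        have : g (ustar w) ≤ g a :=
          hgmono.monotoneOn (le_of_lt (hustar_pos w hw)) (le_of_lt h0) hle
        rw [hgeq w hw] at this
        exact absurd (lt_of_lt_of_le hgw this) (lt_irrefl _)
    · intro a ha
      have ha0 : 0 < a := lt_trans hu0 ha
      have hga : v ^ 2 < g a := by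
        rw [← hgeq v hv]
        exact hgmono (le_of_lt hu0) (le_of_lt ha0) ha
      have hev : ∀ᶠ w in nhds v, w ^ 2 < g a := hsq.eventually_lt_const hga
      filter_upwards [hmem, hev] with w hw hgw
      by_contra hle
      push_neg at hle
      have : g a ≤ g (ustar w) :=
        hgmono.monotoneOn (le_of_lt ha0) (le_of_lt (hustar_pos w hw)) hle
      rw [hgeq w hw] at this
      exact absurd (lt_of_le_of_lt this hgw) (lt_irrefl _)
  -- differentiability of ustar with explicit derivative
  have hu' : ∀ v ∈ Ioi (0:ℝ), HasDerivAt ustar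
      ((P'' (ustar v) * (ustar v) ^ 2 + 2 * P' (ustar v) * ustar v)⁻¹ * (2 * v)) v := by
    intro v hv
    have hv0 : (0:ℝ) < v := hv
    have hu0 : 0 < ustar v := hustar_pos v hv
    set φ : ℝ → ℝ := fun w => ustar (Real.sqrt w) with hφdef
    have hsqv : Real.sqrt (v ^ 2) = v := by
      rw [Real.sqrt_sq (le_of_lt hv0)]
    have hφv : φ (v ^ 2) = ustar v := by rw [hφdef]; simp [hsqv]
    have hφcont : ContinuousAt φ (v ^ 2) := by
      apply ContinuousAt.comp
      · rw [hsqv]; exact hcont v hv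
      · exact Real.continuous_sqrt.continuousAt
    have hgd : HasDerivAt g (P'' (ustar v) * (ustar v) ^ 2 + 2 * P' (ustar v) * ustar v)
        (φ (v ^ 2)) := by
      rw [hφv]; exact hgderiv _ (le_of_lt hu0)
    have hne : P'' (ustar v) * (ustar v) ^ 2 + 2 * P' (ustar v) * ustar v ≠ 0 :=
      ne_of_gt (hg'pos _ hu0)
    have hfg : ∀ᶠ w in nhds (v ^ 2), g (φ w) = w := by
      have hmem : Ioi (0:ℝ) ∈ nhds (v ^ 2) := Ioi_mem_nhds (by positivity)
      filter_upwards [hmem] with w hw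
      have hsw : (0:ℝ) < Real.sqrt w := Real.sqrt_pos.2 hw
      have := hgeq (Real.sqrt w) hsw
      rw [hφdef]
      simpa [Real.sq_sqrt (le_of_lt hw)] using this
    have hφd : HasDerivAt φ
        (P'' (ustar v) * (ustar v) ^ 2 + 2 * P' (ustar v) * ustar v)⁻¹ (v ^ 2) :=
      HasDerivAt.of_local_left_inverse hφcont hgd hne hfg
    have hsq : HasDerivAt (fun x : ℝ => x ^ 2) (2 * v) v := by
      simpa using hasDerivAt_pow 2 v
    have hcomp : HasDerivAt (φ ∘ fun w : ℝ => w ^ 2)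
        ((P'' (ustar v) * (ustar v) ^ 2 + 2 * P' (ustar v) * ustar v)⁻¹ * (2 * v)) v :=
      HasDerivAt.comp v hφd hsq
    apply hcomp.congr_of_eventuallyEq
    have hmem : Ioi (0:ℝ) ∈ nhds v := Ioi_mem_nhds hv0
    filter_upwards [hmem] with w hw
    show ustar w = φ (w ^ 2)
    rw [hφdef]
    simp [Real.sqrt_sq (le_of_lt (show (0:ℝ) < w from hw))]
  -- f and its first derivative
  set f : ℝ → ℝ := fun v => v ^ 2 / ustar v + P (ustar v) with hfdef
  have hf' : ∀ v ∈ Ioi (0:ℝ), HasDerivAt f (2 * v / ustar v) v := by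
    intro v hv
    have hv0 : (0:ℝ) < v := hv
    have hu0 : 0 < ustar v := hustar_pos v hv
    set u' := (P'' (ustar v) * (ustar v) ^ 2 + 2 * P' (ustar v) * ustar v)⁻¹ * (2 * v) with hu'def
    have hsq : HasDerivAt (fun x : ℝ => x ^ 2) (2 * v) v := by
      simpa using hasDerivAt_pow 2 v
    have hdiv : HasDerivAt (fun x => x ^ 2 / ustar x) _ v := hsq.div (hu' v hv) (ne_of_gt hu0)
    have hcomp := (hP' (ustar v) (le_of_lt hu0)).comp v (hu' v hv)
    have hsum : HasDerivAt f _ v := hdiv.add hcomp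
    convert hsum using 1
    have hv2 : P' (ustar v) * (ustar v) ^ 2 = v ^ 2 := hustar_eq v hv
    have hD : P'' (ustar v) * (ustar v) ^ 2 + 2 * P' (ustar v) * ustar v ≠ 0 :=
      ne_of_gt (hg'pos _ hu0)
    have hu0' : ustar v ≠ 0 := ne_of_gt hu0
    rw [← hv2]
    field_simp
    ring
  -- second derivative formula
  have hf'' : ∀ v ∈ Ioi (0:ℝ), HasDerivAt (fun w => 2 * w / ustar w)
      (2 * P'' (ustar v) / (P'' (ustar v) * ustar v + 2 * P' (ustar v))) v := by
    intro v hv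
    have hv0 : (0:ℝ) < v := hv
    have hu0 : 0 < ustar v := hustar_pos v hv
    have hnum : HasDerivAt (fun w : ℝ => 2 * w) 2 v := by
      simpa using (hasDerivAt_id v).const_mul 2
    have hdiv : HasDerivAt (fun w => 2 * w / ustar w) _ v := hnum.div (hu' v hv) (ne_of_gt hu0)
    convert hdiv using 1
    have hv2 : P' (ustar v) * (ustar v) ^ 2 = v ^ 2 := hustar_eq v hv
    have hD : P'' (ustar v) * (ustar v) ^ 2 + 2 * P' (ustar v) * ustar v ≠ 0 :=
      ne_of_gt (hg'pos _ hu0)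
    have hD2 : P'' (ustar v) * ustar v + 2 * P' (ustar v) ≠ 0 := by
      have := hP'pos (ustar v) (le_of_lt hu0)
      have := hP''pos (ustar v) (le_of_lt hu0)
      positivity
    have hu0' : ustar v ≠ 0 := ne_of_gt hu0
    have hvv : 2 * v * ((P'' (ustar v) * (ustar v) ^ 2 + 2 * P' (ustar v) * ustar v)⁻¹ * (2 * v))
        = 4 * P' (ustar v) * (ustar v) ^ 2 *
          (P'' (ustar v) * (ustar v) ^ 2 + 2 * P' (ustar v) * ustar v)⁻¹ := by
      linear_combination (-4 * (P'' (ustar v) * (ustar v) ^ 2 + 2 * P' (ustar v) * ustar v)⁻¹) * hv2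
    rw [hvv]
    field_simp
    ring
  have hderiv1 : ∀ v ∈ Ioi (0:ℝ), deriv f v = 2 * v / ustar v :=
    fun v hv => (hf' v hv).deriv
  have hd2 : ∀ v ∈ Ioi (0:ℝ), deriv (deriv f) v
      = 2 * P'' (ustar v) / (P'' (ustar v) * ustar v + 2 * P' (ustar v)) := by
    intro v hv
    have hmem : Ioi (0:ℝ) ∈ nhds v := Ioi_mem_nhds hv
    have heq : deriv f =ᶠ[nhds v] fun w => 2 * w / ustar w := by
      filter_upwards [hmem] with w hw
      exact hderiv1 w hw
    rw [heq.deriv_eq]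
    exact (hf'' v hv).deriv
  have hpos : ∀ v ∈ Ioi (0:ℝ),
      0 < 2 * P'' (ustar v) / (P'' (ustar v) * ustar v + 2 * P' (ustar v)) := by
    intro v hv
    have hu0 : 0 < ustar v := hustar_pos v hv
    have := hP'pos (ustar v) (le_of_lt hu0)
    have := hP''pos (ustar v) (le_of_lt hu0)
    positivity
  refine ⟨fun v hv => (hu' v hv).differentiableAt, fun v hv => ⟨hd2 v hv, hpos v hv⟩, ?_⟩
  apply strictConvexOn_of_deriv2_pos (convex_Ioi 0)
  · intro v hv
    exact (hf' v hv).differentiableAt.continuousAt.continuousWithinAt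
  · intro v hv
    rw [interior_Ioi] at hv
    have : deriv^[2] f v = deriv (deriv f) v := by
      simp [Function.iterate_succ, Function.comp]
    rw [this, hd2 v hv]
    exact hpos v hv
end

section
/- Let P be C² on (0,∞) with P' > 0 and P'' > 0, let v* > 0, and let u₋, u₊ > 0 with F(u₋, v*) = F(u₊, v*) and u₋ ≠ u₊ (so u₋ < u*(v*) < u₊ or vice versa). Then the entropy condition Λ(u₊, v*) ≤ Λ(u₋, v*) holds if and only if u₊ ≥ u₋, where Λ(u,v) := v²/u² + 2Π'(u) and Π''(u) = P'(u)/u. -/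
open Set

theorem stmt7_key (P P' P'' Pi' : ℝ → ℝ)
    (hP' : ∀ u ∈ Ioi (0:ℝ), HasDerivAt P (P' u) u)
    (hP'' : ∀ u ∈ Ioi (0:ℝ), HasDerivAt P' (P'' u) u)
    (hPi' : ∀ u ∈ Ioi (0:ℝ), HasDerivAt Pi' (P' u / u) u)
    (hP''pos : ∀ u ∈ Ioi (0:ℝ), 0 < P'' u)
    (vstar um up : ℝ) (hv : 0 < vstar) (hum : 0 < um) (hup : 0 < up)
    (hlt : um < up)
    (hRH : vstar^2 / um + P um = vstar^2 / up + P up) :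
    vstar^2 / up^2 + 2 * Pi' up < vstar^2 / um^2 + 2 * Pi' um := by
  set v2 := vstar ^ 2 with hv2
  have hv2pos : 0 < v2 := by positivity
  set H : ℝ → ℝ := fun u => v2 / u + P u with hHdef
  set Hd : ℝ → ℝ := fun u => P' u - v2 / u ^ 2 with hHddef
  have hHderiv : ∀ u ∈ Ioi (0:ℝ), HasDerivAt H (Hd u) u := by
    intro u hu
    have hu0 : u ≠ 0 := ne_of_gt hu
    have h1 : HasDerivAt (fun x : ℝ => v2 / x) (-(v2 / u ^ 2)) u := by
      simpa [div_eq_mul_inv, mul_neg] using (hasDerivAt_inv hu0).const_mul v2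
    have := h1.add (hP' u hu)
    refine this.congr_deriv ?_
    simp [hHddef]; ring
  have hHcont : ContinuousOn H (Ioi 0) := fun x hx =>
    ((hHderiv x hx).continuousAt).continuousWithinAt
  -- Hd is strictly monotone on Ioi 0
  have hHdderiv : ∀ u ∈ Ioi (0:ℝ), HasDerivAt Hd (P'' u + 2 * v2 / u ^ 3) u := by
    intro u hu
    have hu0 : u ≠ 0 := ne_of_gt hu
    have h2 : HasDerivAt (fun x : ℝ => v2 / x ^ 2)
        ((0 * u ^ 2 - v2 * (↑2 * u ^ 1)) / (u ^ 2) ^ 2) u :=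
      (hasDerivAt_const u v2).div (hasDerivAt_pow 2 u) (pow_ne_zero 2 hu0)
    have := (hP'' u hu).sub h2
    refine this.congr_deriv ?_
    field_simp
    ring
  have hHdcont : ContinuousOn Hd (Ioi 0) := fun x hx =>
    ((hHdderiv x hx).continuousAt).continuousWithinAt
  have hHdmono : StrictMonoOn Hd (Ioi 0) := by
    apply strictMonoOn_of_deriv_pos (convex_Ioi 0) hHdcont
    intro x hx
    rw [interior_Ioi] at hx
    rw [(hHdderiv x hx).deriv]
    have := hP''pos x hx
    have hx' : (0:ℝ) < x := hx
    positivity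
  -- MVT: get c in (um, up) with Hd c = 0
  have hIccsub : Icc um up ⊆ Ioi (0:ℝ) := fun x hx => lt_of_lt_of_le hum hx.1
  have hIoosub : Ioo um up ⊆ Ioi (0:ℝ) := fun x hx => lt_trans hum hx.1
  obtain ⟨c, hc, hcval⟩ := exists_hasDerivAt_eq_slope H Hd hlt
    (hHcont.mono hIccsub) (fun x hx => hHderiv x (hIoosub hx))
  have hHeq : H um = H up := hRH
  have hc0 : (0:ℝ) < c := lt_trans hum hc.1
  have hcne : c ≠ 0 := ne_of_gt hc0
  have hHdc : Hd c = 0 := by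
    rw [hcval, hHeq]
    simp
  -- Auxiliary function K
  set K : ℝ → ℝ := fun u => v2 / u ^ 2 + 2 * Pi' u - (2 / c) * H u with hKdef
  set Kd : ℝ → ℝ := fun u => 2 * Hd u * (1 / u - 1 / c) with hKddef
  have hKderiv : ∀ u ∈ Ioi (0:ℝ), HasDerivAt K (Kd u) u := by
    intro u hu
    have hu0 : u ≠ 0 := ne_of_gt hu
    have h2 : HasDerivAt (fun x : ℝ => v2 / x ^ 2)
        ((0 * u ^ 2 - v2 * (↑2 * u ^ 1)) / (u ^ 2) ^ 2) u :=
      (hasDerivAt_const u v2).div (hasDerivAt_pow 2 u) (pow_ne_zero 2 hu0)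
    have h3 := (hPi' u hu).const_mul 2
    have h4 := (hHderiv u hu).const_mul (2 / c)
    have := (h2.add h3).sub h4
    refine this.congr_deriv ?_
    simp only [hKddef, hHddef]
    field_simp
    ring
  have hKcont : ContinuousOn K (Ioi 0) := fun x hx =>
    ((hKderiv x hx).continuousAt).continuousWithinAt
  -- Kd is negative on Ioo um up away from c
  have hKdneg_left : ∀ x ∈ Ioo um c, Kd x < 0 := by
    intro x hx
    have hx0 : (0:ℝ) < x := lt_trans hum hx.1
    have h1 : Hd x < 0 := by
      have := hHdmono (mem_Ioi.2 hx0) (mem_Ioi.2 hc0) hx.2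
      linarith [hHdc ▸ this]
    have h2 : 1 / c < 1 / x := one_div_lt_one_div_of_lt hx0 hx.2
    have : 0 < 1 / x - 1 / c := by linarith
    simp only [hKddef]
    nlinarith [mul_neg_of_neg_of_pos h1 this]
  have hKdneg_right : ∀ x ∈ Ioo c up, Kd x < 0 := by
    intro x hx
    have hx0 : (0:ℝ) < x := lt_trans hc0 hx.1
    have h1 : 0 < Hd x := by
      have := hHdmono (mem_Ioi.2 hc0) (mem_Ioi.2 hx0) hx.1
      linarith [hHdc ▸ this]
    have h2 : 1 / x < 1 / c := one_div_lt_one_div_of_lt hc0 hx.1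
    have : 1 / x - 1 / c < 0 := by linarith
    simp only [hKddef]
    nlinarith [mul_neg_of_pos_of_neg h1 this]
  -- K is strictly decreasing on [um, c] and on [c, up]
  have hanti1 : StrictAntiOn K (Icc um c) := by
    apply strictAntiOn_of_deriv_neg (convex_Icc um c)
      (hKcont.mono (fun x hx => lt_of_lt_of_le hum hx.1))
    intro x hx
    rw [interior_Icc] at hx
    rw [(hKderiv x (lt_trans hum hx.1)).deriv]
    exact hKdneg_left x hx
  have hanti2 : StrictAntiOn K (Icc c up) := by
    apply strictAntiOn_of_deriv_neg (convex_Icc c up)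
      (hKcont.mono (fun x hx => lt_of_lt_of_le hc0 hx.1))
    intro x hx
    rw [interior_Icc] at hx
    rw [(hKderiv x (lt_trans hc0 hx.1)).deriv]
    exact hKdneg_right x hx
  have h1 : K c < K um := hanti1 (left_mem_Icc.2 (le_of_lt hc.1))
    (right_mem_Icc.2 (le_of_lt hc.1)) hc.1
  have h2 : K up < K c := hanti2 (left_mem_Icc.2 (le_of_lt hc.2))
    (right_mem_Icc.2 (le_of_lt hc.2)) hc.2
  have h3 : K up < K um := lt_trans h2 h1
  have hHeq' : (2 / c) * H um = (2 / c) * H up := by rw [hHeq]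
  simp only [hKdef] at h3
  linarith

/-- For a stationary jump of the isentropic Euler system: if `u₋ ≠ u₊` are positive
with `F(u₋,v*) = F(u₊,v*)` (where `F(u,v) = v²/u + P(u)`), then the entropy condition
`Λ(u₊,v*) ≤ Λ(u₋,v*)` holds if and only if `u₊ ≥ u₋`, where `Λ(u,v) = v²/u² + 2Π'(u)`
and `Π'` is an antiderivative of `u ↦ P'(u)/u`. -/
theorem stmt7 (P P' P'' Pi' : ℝ → ℝ)
    (hP' : ∀ u ∈ Ioi (0:ℝ), HasDerivAt P (P' u) u)
    (hP'' : ∀ u ∈ Ioi (0:ℝ), HasDerivAt P' (P'' u) u)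
    (hP''cont : ContinuousOn P'' (Ioi 0))
    (hP'pos : ∀ u ∈ Ioi (0:ℝ), 0 < P' u)
    (hP''pos : ∀ u ∈ Ioi (0:ℝ), 0 < P'' u)
    (hPi' : ∀ u ∈ Ioi (0:ℝ), HasDerivAt Pi' (P' u / u) u)
    (vstar um up : ℝ) (hv : 0 < vstar) (hum : 0 < um) (hup : 0 < up)
    (hne : um ≠ up)
    (hRH : vstar^2 / um + P um = vstar^2 / up + P up) :
    (vstar^2 / up^2 + 2 * Pi' up ≤ vstar^2 / um^2 + 2 * Pi' um) ↔ um ≤ up := by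
  constructor
  · intro h
    by_contra hcon
    push_neg at hcon
    have := stmt7_key P P' P'' Pi' hP' hP'' hPi' hP''pos vstar up um hv hup hum
      hcon hRH.symm
    linarith
  · intro h
    have hlt : um < up := lt_of_le_of_ne h hne
    have := stmt7_key P P' P'' Pi' hP' hP'' hPi' hP''pos vstar um up hv hum hup
      hlt hRH
    linarith
end

section
/- Let w̄ > 0, ε > 0, ℓ > 0, and ξ ∈ (-ℓ, ℓ). Then the equation √(2κ) · tanh((ℓ+ξ)/(ε) · √(κ/2)) = w̄ has a unique solution κ₋ = κ₋(ξ) in (w̄²/2, ∞). -/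
open Real Set

lemma my_tanh_lt_one (x : ℝ) : Real.tanh x < 1 := by
  rw [Real.tanh_eq_sinh_div_cosh]
  rw [div_lt_one (Real.cosh_pos x)]
  exact Real.sinh_lt_cosh x

lemma my_tanh_strictMono : StrictMono Real.tanh := by
  intro a b hab
  rw [Real.tanh_eq_sinh_div_cosh, Real.tanh_eq_sinh_div_cosh,
    div_lt_div_iff₀ (Real.cosh_pos a) (Real.cosh_pos b)]
  have h : Real.sinh (a - b) < 0 := Real.sinh_neg_iff.2 (by linarith)
  rw [Real.sinh_sub] at h
  linarith

lemma my_tanh_pos {x : ℝ} (hx : 0 < x) : 0 < Real.tanh x := by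
  have := my_tanh_strictMono hx
  rwa [Real.tanh_zero] at this

lemma my_continuous_tanh : Continuous Real.tanh := by
  have : Real.tanh = fun x => Real.sinh x / Real.cosh x :=
    funext fun x => Real.tanh_eq_sinh_div_cosh x
  rw [this]
  exact Real.continuous_sinh.div Real.continuous_cosh fun x => (Real.cosh_pos x).ne'

/-- For `w̄, ε, ℓ > 0` and `ξ ∈ (-ℓ,ℓ)`, the equation
`√(2κ)·tanh((ℓ+ξ)/ε·√(κ/2)) = w̄` has a unique solution `κ₋` in `(w̄²/2, ∞)`. -/
theorem stmt9 (wbar ε ℓ ξ : ℝ) (hwbar : 0 < wbar) (hε : 0 < ε) (hℓ : 0 < ℓ)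
    (hξ : ξ ∈ Ioo (-ℓ) ℓ) :
    ∃! κ : ℝ, κ ∈ Ioi (wbar^2 / 2) ∧
      Real.sqrt (2 * κ) * Real.tanh ((ℓ + ξ) / ε * Real.sqrt (κ / 2)) = wbar := by
  obtain ⟨hξ1, hξ2⟩ := hξ
  set c : ℝ := (ℓ + ξ) / ε with hc_def
  have hc : 0 < c := div_pos (by linarith) hε
  set f : ℝ → ℝ := fun κ => Real.sqrt (2 * κ) * Real.tanh (c * Real.sqrt (κ / 2)) with hf
  -- f is strictly monotone on nonneg reals
  have hmono : ∀ a b : ℝ, 0 < a → a < b → f a < f b := by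
    intro a b ha hab
    have hb : 0 < b := ha.trans hab
    have h1 : Real.sqrt (2 * a) < Real.sqrt (2 * b) :=
      Real.sqrt_lt_sqrt (by linarith) (by linarith)
    have h2 : Real.sqrt (a / 2) < Real.sqrt (b / 2) :=
      Real.sqrt_lt_sqrt (by positivity) (by linarith)
    have h3 : Real.tanh (c * Real.sqrt (a / 2)) < Real.tanh (c * Real.sqrt (b / 2)) :=
      my_tanh_strictMono (by nlinarith [Real.sqrt_nonneg (a / 2)])
    have h4 : 0 < Real.tanh (c * Real.sqrt (a / 2)) :=
      my_tanh_pos (by positivity)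
    have h5 : 0 < Real.sqrt (2 * a) := Real.sqrt_pos.2 (by linarith)
    calc f a = Real.sqrt (2 * a) * Real.tanh (c * Real.sqrt (a / 2)) := rfl
      _ < Real.sqrt (2 * b) * Real.tanh (c * Real.sqrt (b / 2)) := by nlinarith
      _ = f b := rfl
  have hcont : Continuous f := by
    apply Continuous.mul
    · exact Real.continuous_sqrt.comp (continuous_const.mul continuous_id)
    · exact my_continuous_tanh.comp (continuous_const.mul
        (Real.continuous_sqrt.comp (continuous_id.div_const 2)))
  set a : ℝ := wbar ^ 2 / 2 with ha_def
  have ha : 0 < a := by positivity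
  -- f a < wbar
  have hsa : Real.sqrt (2 * a) = wbar := by
    rw [ha_def]
    rw [show 2 * (wbar ^ 2 / 2) = wbar ^ 2 by ring, Real.sqrt_sq hwbar.le]
  have hfa : f a < wbar := by
    have := my_tanh_lt_one (c * Real.sqrt (a / 2))
    have h4 : 0 < Real.tanh (c * Real.sqrt (a / 2)) :=
      my_tanh_pos (by positivity)
    calc f a = Real.sqrt (2 * a) * Real.tanh (c * Real.sqrt (a / 2)) := rfl
      _ = wbar * Real.tanh (c * Real.sqrt (a / 2)) := by rw [hsa]
      _ < wbar * 1 := by nlinarith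
      _ = wbar := mul_one wbar
  -- define t0 and K
  set t0 : ℝ := Real.tanh (c * Real.sqrt (a / 2)) with ht0_def
  have ht0 : 0 < t0 := my_tanh_pos (by positivity)
  have ht0' : t0 < 1 := my_tanh_lt_one _
  set K : ℝ := wbar ^ 2 / (2 * t0 ^ 2) with hK_def
  have haK : a < K := by
    rw [ha_def, hK_def]
    rw [div_lt_div_iff₀ two_pos (by positivity)]
    have ht0sq : t0 ^ 2 < 1 := by nlinarith
    nlinarith [pow_pos hwbar 2]
  have hfK : wbar ≤ f K := by
    have hKpos : 0 < K := ha.trans haK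
    have h2K : Real.sqrt (2 * K) = wbar / t0 := by
      rw [hK_def, show 2 * (wbar ^ 2 / (2 * t0 ^ 2)) = (wbar / t0) ^ 2 by
        field_simp]
      exact Real.sqrt_sq (by positivity)
    have hK2 : Real.sqrt (a / 2) ≤ Real.sqrt (K / 2) :=
      Real.sqrt_le_sqrt (by linarith)
    have htK : t0 ≤ Real.tanh (c * Real.sqrt (K / 2)) := by
      rcases eq_or_lt_of_le hK2 with h | h
      · rw [ht0_def, h]
      · exact (my_tanh_strictMono (by nlinarith [Real.sqrt_nonneg (a/2)])).le
    calc wbar = (wbar / t0) * t0 := by field_simp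
      _ ≤ Real.sqrt (2 * K) * Real.tanh (c * Real.sqrt (K / 2)) := by
          rw [h2K]
          have : 0 < wbar / t0 := by positivity
          nlinarith
      _ = f K := rfl
  -- IVT
  obtain ⟨κ, hκmem, hκeq⟩ := intermediate_value_Icc haK.le hcont.continuousOn
    (show wbar ∈ Icc (f a) (f K) from ⟨hfa.le, hfK⟩)
  have hκa : a < κ := by
    rcases eq_or_lt_of_le hκmem.1 with h | h
    · exfalso; rw [← h] at hκeq; exact absurd hκeq hfa.ne
    · exact h
  refine ⟨κ, ⟨hκa, hκeq⟩, ?_⟩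
  rintro y ⟨hy1, hy2⟩
  have hy2' : f y = wbar := hy2
  by_contra hne
  rcases lt_or_gt_of_ne hne with h | h
  · have := hmono y κ (ha.trans hy1) h
    rw [hy2', hκeq] at this; exact lt_irrefl _ this
  · have := hmono κ y (ha.trans hκa) h
    rw [hy2', hκeq] at this; exact lt_irrefl _ this
end
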